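/- For all real x with 0 ≤ x ≤ 1, one has 2⁵⁰·(f((1+x)/1024) − f((1−x)/1024)) = (132809/40989847500)x + (583/8037225)x³ + (19/60750)x⁵ + (1/2835)x⁷ + (1/11340)x⁹. -/

import Mathlib

open Set MeasureTheory intervalIntegral Topology


lemma fab_deriv (f : ℝ → ℝ) (hcont : ContinuousOn f (Set.Ici 0))
    (hint : ∀ x : ℝ, 0 ≤ x → f x = ∫ t in (0:ℝ)..(2 * x), f t) :
    ∀ y : ℝ, 0 < y → HasDerivAt f (2 * f (2 * y)) y := by
  intro y hy
  have h2y : (0:ℝ) < 2 * y := by linarith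
  have hii : IntervalIntegrable f volume 0 (2*y) := by
    apply ContinuousOn.intervalIntegrable
    apply hcont.mono
    rw [Set.uIcc_of_le h2y.le]
    exact fun t ht => ht.1
  have hmeas : StronglyMeasurableAtFilter f (𝓝 (2*y)) volume :=
    ContinuousOn.stronglyMeasurableAtFilter isOpen_Ioi
      (hcont.mono (Set.Ioi_subset_Ici le_rfl)) (2*y) h2y
  have hca : ContinuousAt f (2*y) := hcont.continuousAt (Ici_mem_nhds h2y)
  have hG : HasDerivAt (fun u : ℝ => ∫ t in (0:ℝ)..u, f t) (f (2*y)) (2*y) :=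
    integral_hasDerivAt_right hii hmeas hca
  have h2 : HasDerivAt (fun x : ℝ => ∫ t in (0:ℝ)..(2*x), f t) (2 * f (2*y)) y := by
    have h3 := hG.comp y ((hasDerivAt_id y).const_mul 2)
    have h4 : HasDerivAt (fun x : ℝ => ∫ t in (0:ℝ)..(2*x), f t) (f (2*y) * (2*1)) y := h3
    have h5 : (2:ℝ) * f (2*y) = f (2*y) * (2*1) := by ring
    rw [h5]
    exact h4
  apply h2.congr_of_eventuallyEq
  filter_upwards [Ioi_mem_nhds hy] with t ht
  exact hint t (le_of_lt ht)

lemma fab_pd (c1 c3 c5 c7 c9 x : ℝ) :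
    HasDerivAt (fun y : ℝ => c1*y + c3*y^3 + c5*y^5 + c7*y^7 + c9*y^9)
      (c1 + 3*c3*x^2 + 5*c5*x^4 + 7*c7*x^6 + 9*c9*x^8) x := by
  have h := (((((hasDerivAt_id x).const_mul c1).add ((hasDerivAt_pow 3 x).const_mul c3)).add
    ((hasDerivAt_pow 5 x).const_mul c5)).add ((hasDerivAt_pow 7 x).const_mul c7)).add
    ((hasDerivAt_pow 9 x).const_mul c9)
  refine h.congr_deriv (Eq.symm ?_)
  push_cast
  ring

lemma fab_pe (c0 c2 c4 c6 c8 x : ℝ) :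
    HasDerivAt (fun y : ℝ => c0 + c2*y^2 + c4*y^4 + c6*y^6 + c8*y^8)
      (2*c2*x + 4*c4*x^3 + 6*c6*x^5 + 8*c8*x^7) x := by
  have h := ((((hasDerivAt_const x c0).add ((hasDerivAt_pow 2 x).const_mul c2)).add
    ((hasDerivAt_pow 4 x).const_mul c4)).add ((hasDerivAt_pow 6 x).const_mul c6)).add
    ((hasDerivAt_pow 8 x).const_mul c8)
  refine h.congr_deriv (Eq.symm ?_)
  push_cast
  ring

lemma fab_main (u P v : ℝ → ℝ) (hud : ∀ x ∈ Set.Ico (0:ℝ) 1, HasDerivAt u (v x) x)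
    (hPd : ∀ x ∈ Set.Ico (0:ℝ) 1, HasDerivAt P (v x) x)
    (hu : ContinuousOn u (Set.Icc 0 1)) (hP : ContinuousOn P (Set.Icc 0 1))
    (h0 : u 0 = P 0) : ∀ x ∈ Set.Icc (0:ℝ) 1, u x = P x :=
  eq_of_has_deriv_right_eq (fun x hx => (hud x hx).hasDerivWithinAt)
    (fun x hx => (hPd x hx).hasDerivWithinAt) hu hP h0

section
variable (f : ℝ → ℝ)

lemma fab_keyP (hderiv : ∀ y : ℝ, 0 < y → HasDerivAt f (2 * f (2 * y)) y)
    (N M x : ℝ) (hN : 0 < N) (hM : N = 2*M) (hx : -1 < x) :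
    HasDerivAt (fun y : ℝ => f ((1+y)/N)) ((2/N) * f ((1+x)/M)) x := by
  have h1 : HasDerivAt (fun y : ℝ => (1+y)/N) (1/N) x := by
    simpa using ((hasDerivAt_id x).const_add 1).div_const N
  have hpos : 0 < (1+x)/N := div_pos (by linarith) hN
  have h2 := (hderiv _ hpos).comp x h1
  have h3 : HasDerivAt (fun y : ℝ => f ((1+y)/N)) (2 * f (2 * ((1+x)/N)) * (1/N)) x := h2
  have hM0 : M ≠ 0 := by nlinarith
  have e : 2 * ((1+x)/N) = (1+x)/M := by
    subst hM
    field_simp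
  rw [e] at h3
  convert h3 using 1
  ring

lemma fab_keyM (hderiv : ∀ y : ℝ, 0 < y → HasDerivAt f (2 * f (2 * y)) y)
    (N M x : ℝ) (hN : 0 < N) (hM : N = 2*M) (hx : x < 1) :
    HasDerivAt (fun y : ℝ => f ((1-y)/N)) (-((2/N) * f ((1-x)/M))) x := by
  have h1 : HasDerivAt (fun y : ℝ => (1-y)/N) (-1/N) x := by
    simpa using ((hasDerivAt_id x).const_sub 1).div_const N
  have hpos : 0 < (1-x)/N := div_pos (by linarith) hN
  have h2 := (hderiv _ hpos).comp x h1
  have h3 : HasDerivAt (fun y : ℝ => f ((1-y)/N)) (2 * f (2 * ((1-x)/N)) * (-1/N)) x := h2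
  have hM0 : M ≠ 0 := by nlinarith
  have e : 2 * ((1-x)/N) = (1-x)/M := by
    subst hM
    field_simp
  rw [e] at h3
  convert h3 using 1
  ring

lemma fab_cP (hcont : ContinuousOn f (Set.Ici 0)) (N : ℝ) (hN : 0 < N) :
    ContinuousOn (fun x : ℝ => f ((1+x)/N)) (Set.Icc 0 1) := by
  refine hcont.comp ?_ ?_
  · exact ((continuous_const.add continuous_id).div_const N).continuousOn
  · exact fun x hx => Set.mem_Ici.mpr (div_nonneg (by linarith [hx.1]) hN.le)

lemma fab_cM (hcont : ContinuousOn f (Set.Ici 0)) (N : ℝ) (hN : 0 < N) :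
    ContinuousOn (fun x : ℝ => f ((1-x)/N)) (Set.Icc 0 1) := by
  refine hcont.comp ?_ ?_
  · exact ((continuous_const.sub continuous_id).div_const N).continuousOn
  · exact fun x hx => Set.mem_Ici.mpr (div_nonneg (by linarith [hx.2]) hN.le)

end


open scoped BigOperators

theorem fabius_stmt_9 (f : ℝ → ℝ)
    (hcont : ContinuousOn f (Set.Ici 0))
    (hsym : ∀ x : ℝ, 0 ≤ x → x ≤ 1 → f x + f (1 - x) = 1)
    (hint : ∀ x : ℝ, 0 ≤ x → f x = ∫ t in (0:ℝ)..(2 * x), f t) :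
    ∀ x : ℝ, 0 ≤ x → x ≤ 1 →
      2 ^ 50 * (f ((1 + x) / 1024) - f ((1 - x) / 1024)) = (132809 / 40989847500) * x + (583 / 8037225) * x ^ 3 + (19 / 60750) * x ^ 5 + (1 / 2835) * x ^ 7 + (1 / 11340) * x ^ 9 := by
  have hderiv := fab_deriv f hcont hint
  have hf0 : f 0 = 0 := by simpa using hint 0 le_rfl
  have h1 : ∀ x ∈ Icc (0:ℝ) 1, f ((1+x)/2) + f ((1-x)/2) = 1 := by
    intro x hx
    have h := hsym ((1-x)/2) (by linarith [hx.2]) (by linarith [hx.1])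
    have e : 1 - (1-x)/2 = (1+x)/2 := by ring
    rw [e] at h
    linarith
  have g2 : ∀ x ∈ Icc (0:ℝ) 1, f ((1+x)/4) - f ((1-x)/4) = (1/2)*x + (0)*x^3 + (0)*x^5 + (0)*x^7 + (0)*x^9 := by
    refine fab_main (fun x => f ((1+x)/4) - f ((1-x)/4))
      (fun x => (1/2)*x + (0)*x^3 + (0)*x^5 + (0)*x^7 + (0)*x^9)
      (fun x => (1/2) + 3*(0)*x^2 + 5*(0)*x^4 + 7*(0)*x^6 + 9*(0)*x^8) ?_ ?_ ?_ ?_ ?_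
    · intro x hx
      have d := (fab_keyP f hderiv 4 2 x (by norm_num) (by norm_num) (by linarith [hx.1])).sub
        (fab_keyM f hderiv 4 2 x (by norm_num) (by norm_num) hx.2)
      refine d.congr_deriv (Eq.symm ?_)
      linear_combination (-(1/2 : ℝ)) * h1 x ⟨hx.1, hx.2.le⟩
    · intro x hx
      exact fab_pd (1/2) (0) (0) (0) (0) x
    · exact (fab_cP f hcont 4 (by norm_num)).sub (fab_cM f hcont 4 (by norm_num))
    · exact Continuous.continuousOn (by fun_prop)
    · norm_num
  have h3 : ∀ x ∈ Icc (0:ℝ) 1, f ((1+x)/8) + f ((1-x)/8) = (2*f (1/8)) + (1/16)*x^2 + (0)*x^4 + (0)*x^6 + (0)*x^8 := by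
    refine fab_main (fun x => f ((1+x)/8) + f ((1-x)/8))
      (fun x => (2*f (1/8)) + (1/16)*x^2 + (0)*x^4 + (0)*x^6 + (0)*x^8)
      (fun x => 2*(1/16)*x + 4*(0)*x^3 + 6*(0)*x^5 + 8*(0)*x^7) ?_ ?_ ?_ ?_ ?_
    · intro x hx
      have d := (fab_keyP f hderiv 8 4 x (by norm_num) (by norm_num) (by linarith [hx.1])).add
        (fab_keyM f hderiv 8 4 x (by norm_num) (by norm_num) hx.2)
      refine d.congr_deriv (Eq.symm ?_)
      linear_combination (-(1/4 : ℝ)) * g2 x ⟨hx.1, hx.2.le⟩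
    · intro x hx
      exact fab_pe (2*f (1/8)) (1/16) (0) (0) (0) x
    · exact (fab_cP f hcont 8 (by norm_num)).add (fab_cM f hcont 8 (by norm_num))
    · exact Continuous.continuousOn (by fun_prop)
    · norm_num
      ring
  have g4 : ∀ x ∈ Icc (0:ℝ) 1, f ((1+x)/16) - f ((1-x)/16) = (f (1/8)/4)*x + (1/384)*x^3 + (0)*x^5 + (0)*x^7 + (0)*x^9 := by
    refine fab_main (fun x => f ((1+x)/16) - f ((1-x)/16))
      (fun x => (f (1/8)/4)*x + (1/384)*x^3 + (0)*x^5 + (0)*x^7 + (0)*x^9)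
      (fun x => (f (1/8)/4) + 3*(1/384)*x^2 + 5*(0)*x^4 + 7*(0)*x^6 + 9*(0)*x^8) ?_ ?_ ?_ ?_ ?_
    · intro x hx
      have d := (fab_keyP f hderiv 16 8 x (by norm_num) (by norm_num) (by linarith [hx.1])).sub
        (fab_keyM f hderiv 16 8 x (by norm_num) (by norm_num) hx.2)
      refine d.congr_deriv (Eq.symm ?_)
      linear_combination (-(1/8 : ℝ)) * h3 x ⟨hx.1, hx.2.le⟩
    · intro x hx
      exact fab_pd (f (1/8)/4) (1/384) (0) (0) (0) x
    · exact (fab_cP f hcont 16 (by norm_num)).sub (fab_cM f hcont 16 (by norm_num))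
    · exact Continuous.continuousOn (by fun_prop)
    · norm_num
  have e4 := g4 1 (by norm_num)
  norm_num [hf0] at e4
  have ha3 : f (1/8) = (1/288) := by linarith
  have g4' : ∀ x ∈ Icc (0:ℝ) 1, f ((1+x)/16) - f ((1-x)/16) = (1/1152)*x + (1/384)*x^3 + (0)*x^5 + (0)*x^7 + (0)*x^9 := by
    intro x hx
    rw [g4 x hx, ha3]
    ring
  have h5 : ∀ x ∈ Icc (0:ℝ) 1, f ((1+x)/32) + f ((1-x)/32) = (2*f (1/32)) + (1/36864)*x^2 + (1/24576)*x^4 + (0)*x^6 + (0)*x^8 := by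
    refine fab_main (fun x => f ((1+x)/32) + f ((1-x)/32))
      (fun x => (2*f (1/32)) + (1/36864)*x^2 + (1/24576)*x^4 + (0)*x^6 + (0)*x^8)
      (fun x => 2*(1/36864)*x + 4*(1/24576)*x^3 + 6*(0)*x^5 + 8*(0)*x^7) ?_ ?_ ?_ ?_ ?_
    · intro x hx
      have d := (fab_keyP f hderiv 32 16 x (by norm_num) (by norm_num) (by linarith [hx.1])).add
        (fab_keyM f hderiv 32 16 x (by norm_num) (by norm_num) hx.2)
      refine d.congr_deriv (Eq.symm ?_)
      linear_combination (-(1/16 : ℝ)) * g4' x ⟨hx.1, hx.2.le⟩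
    · intro x hx
      exact fab_pe (2*f (1/32)) (1/36864) (1/24576) (0) (0) x
    · exact (fab_cP f hcont 32 (by norm_num)).add (fab_cM f hcont 32 (by norm_num))
    · exact Continuous.continuousOn (by fun_prop)
    · norm_num
      ring
  have g6 : ∀ x ∈ Icc (0:ℝ) 1, f ((1+x)/64) - f ((1-x)/64) = (f (1/32)/16)*x + (1/3538944)*x^3 + (1/3932160)*x^5 + (0)*x^7 + (0)*x^9 := by
    refine fab_main (fun x => f ((1+x)/64) - f ((1-x)/64))
      (fun x => (f (1/32)/16)*x + (1/3538944)*x^3 + (1/3932160)*x^5 + (0)*x^7 + (0)*x^9)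
      (fun x => (f (1/32)/16) + 3*(1/3538944)*x^2 + 5*(1/3932160)*x^4 + 7*(0)*x^6 + 9*(0)*x^8) ?_ ?_ ?_ ?_ ?_
    · intro x hx
      have d := (fab_keyP f hderiv 64 32 x (by norm_num) (by norm_num) (by linarith [hx.1])).sub
        (fab_keyM f hderiv 64 32 x (by norm_num) (by norm_num) hx.2)
      refine d.congr_deriv (Eq.symm ?_)
      linear_combination (-(1/32 : ℝ)) * h5 x ⟨hx.1, hx.2.le⟩
    · intro x hx
      exact fab_pd (f (1/32)/16) (1/3538944) (1/3932160) (0) (0) x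
    · exact (fab_cP f hcont 64 (by norm_num)).sub (fab_cM f hcont 64 (by norm_num))
    · exact Continuous.continuousOn (by fun_prop)
    · norm_num
  have e6 := g6 1 (by norm_num)
  norm_num [hf0] at e6
  have ha5 : f (1/32) = (19/33177600) := by linarith
  have g6' : ∀ x ∈ Icc (0:ℝ) 1, f ((1+x)/64) - f ((1-x)/64) = (19/530841600)*x + (1/3538944)*x^3 + (1/3932160)*x^5 + (0)*x^7 + (0)*x^9 := by
    intro x hx
    rw [g6 x hx, ha5]
    ring
  have h7 : ∀ x ∈ Icc (0:ℝ) 1, f ((1+x)/128) + f ((1-x)/128) = (2*f (1/128)) + (19/67947724800)*x^2 + (1/905969664)*x^4 + (1/1509949440)*x^6 + (0)*x^8 := by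
    refine fab_main (fun x => f ((1+x)/128) + f ((1-x)/128))
      (fun x => (2*f (1/128)) + (19/67947724800)*x^2 + (1/905969664)*x^4 + (1/1509949440)*x^6 + (0)*x^8)
      (fun x => 2*(19/67947724800)*x + 4*(1/905969664)*x^3 + 6*(1/1509949440)*x^5 + 8*(0)*x^7) ?_ ?_ ?_ ?_ ?_
    · intro x hx
      have d := (fab_keyP f hderiv 128 64 x (by norm_num) (by norm_num) (by linarith [hx.1])).add
        (fab_keyM f hderiv 128 64 x (by norm_num) (by norm_num) hx.2)
      refine d.congr_deriv (Eq.symm ?_)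
      linear_combination (-(1/64 : ℝ)) * g6' x ⟨hx.1, hx.2.le⟩
    · intro x hx
      exact fab_pe (2*f (1/128)) (19/67947724800) (1/905969664) (1/1509949440) (0) x
    · exact (fab_cP f hcont 128 (by norm_num)).add (fab_cM f hcont 128 (by norm_num))
    · exact Continuous.continuousOn (by fun_prop)
    · norm_num
      ring
  have g8 : ∀ x ∈ Icc (0:ℝ) 1, f ((1+x)/256) - f ((1-x)/256) = (f (1/128)/64)*x + (19/26091926323200)*x^3 + (1/579820584960)*x^5 + (1/1352914698240)*x^7 + (0)*x^9 := by
    refine fab_main (fun x => f ((1+x)/256) - f ((1-x)/256))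
      (fun x => (f (1/128)/64)*x + (19/26091926323200)*x^3 + (1/579820584960)*x^5 + (1/1352914698240)*x^7 + (0)*x^9)
      (fun x => (f (1/128)/64) + 3*(19/26091926323200)*x^2 + 5*(1/579820584960)*x^4 + 7*(1/1352914698240)*x^6 + 9*(0)*x^8) ?_ ?_ ?_ ?_ ?_
    · intro x hx
      have d := (fab_keyP f hderiv 256 128 x (by norm_num) (by norm_num) (by linarith [hx.1])).sub
        (fab_keyM f hderiv 256 128 x (by norm_num) (by norm_num) hx.2)
      refine d.congr_deriv (Eq.symm ?_)
      linear_combination (-(1/128 : ℝ)) * h7 x ⟨hx.1, hx.2.le⟩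
    · intro x hx
      exact fab_pd (f (1/128)/64) (19/26091926323200) (1/579820584960) (1/1352914698240) (0) x
    · exact (fab_cP f hcont 256 (by norm_num)).sub (fab_cM f hcont 256 (by norm_num))
    · exact Continuous.continuousOn (by fun_prop)
    · norm_num
  have e8 := g8 1 (by norm_num)
  norm_num [hf0] at e8
  have ha7 : f (1/128) = (583/179789679820800) := by linarith
  have g8' : ∀ x ∈ Icc (0:ℝ) 1, f ((1+x)/256) - f ((1-x)/256) = (583/11506539508531200)*x + (19/26091926323200)*x^3 + (1/579820584960)*x^5 + (1/1352914698240)*x^7 + (0)*x^9 := by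
    intro x hx
    rw [g8 x hx, ha7]
    ring
  have h9 : ∀ x ∈ Icc (0:ℝ) 1, f ((1+x)/512) + f ((1-x)/512) = (2*f (1/512)) + (583/5891348228367974400)*x^2 + (19/26718132554956800)*x^4 + (1/890604418498560)*x^6 + (1/2770769301995520)*x^8 := by
    refine fab_main (fun x => f ((1+x)/512) + f ((1-x)/512))
      (fun x => (2*f (1/512)) + (583/5891348228367974400)*x^2 + (19/26718132554956800)*x^4 + (1/890604418498560)*x^6 + (1/2770769301995520)*x^8)
      (fun x => 2*(583/5891348228367974400)*x + 4*(19/26718132554956800)*x^3 + 6*(1/890604418498560)*x^5 + 8*(1/2770769301995520)*x^7) ?_ ?_ ?_ ?_ ?_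
    · intro x hx
      have d := (fab_keyP f hderiv 512 256 x (by norm_num) (by norm_num) (by linarith [hx.1])).add
        (fab_keyM f hderiv 512 256 x (by norm_num) (by norm_num) hx.2)
      refine d.congr_deriv (Eq.symm ?_)
      linear_combination (-(1/256 : ℝ)) * g8' x ⟨hx.1, hx.2.le⟩
    · intro x hx
      exact fab_pe (2*f (1/512)) (583/5891348228367974400) (19/26718132554956800) (1/890604418498560) (1/2770769301995520) x
    · exact (fab_cP f hcont 512 (by norm_num)).add (fab_cM f hcont 512 (by norm_num))
    · exact Continuous.continuousOn (by fun_prop)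
    · norm_num
      ring
  have g10 : ∀ x ∈ Icc (0:ℝ) 1, f ((1+x)/1024) - f ((1-x)/1024) = (f (1/512)/256)*x + (583/9049110878773208678400)*x^3 + (19/68398419340689408000)*x^5 + (1/3191926235898839040)*x^7 + (1/12767704943595356160)*x^9 := by
    refine fab_main (fun x => f ((1+x)/1024) - f ((1-x)/1024))
      (fun x => (f (1/512)/256)*x + (583/9049110878773208678400)*x^3 + (19/68398419340689408000)*x^5 + (1/3191926235898839040)*x^7 + (1/12767704943595356160)*x^9)
      (fun x => (f (1/512)/256) + 3*(583/9049110878773208678400)*x^2 + 5*(19/68398419340689408000)*x^4 + 7*(1/3191926235898839040)*x^6 + 9*(1/12767704943595356160)*x^8) ?_ ?_ ?_ ?_ ?_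
    · intro x hx
      have d := (fab_keyP f hderiv 1024 512 x (by norm_num) (by norm_num) (by linarith [hx.1])).sub
        (fab_keyM f hderiv 1024 512 x (by norm_num) (by norm_num) hx.2)
      refine d.congr_deriv (Eq.symm ?_)
      linear_combination (-(1/512 : ℝ)) * h9 x ⟨hx.1, hx.2.le⟩
    · intro x hx
      exact fab_pd (f (1/512)/256) (583/9049110878773208678400) (19/68398419340689408000) (1/3191926235898839040) (1/12767704943595356160) x
    · exact (fab_cP f hcont 1024 (by norm_num)).sub (fab_cM f hcont 1024 (by norm_num))
    · exact Continuous.continuousOn (by fun_prop)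
    · norm_num
  have e10 := g10 1 (by norm_num)
  norm_num [hf0] at e10
  have ha9 : f (1/512) = (132809/180275255788060016640000) := by linarith
  have g10' : ∀ x ∈ Icc (0:ℝ) 1, f ((1+x)/1024) - f ((1-x)/1024) = (132809/46150465481743364259840000)*x + (583/9049110878773208678400)*x^3 + (19/68398419340689408000)*x^5 + (1/3191926235898839040)*x^7 + (1/12767704943595356160)*x^9 := by
    intro x hx
    rw [g10 x hx, ha9]
    ring
  intro x hx0 hx1
  have hfin := g10' x ⟨hx0, hx1⟩
  rw [hfin]
  ring
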